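/- Let m be a natural number and let ω : (Fin m → ℂ) → ℂ be a continuous function that is not identically zero and satisfies, for all z, w : Fin m → ℂ, ω (z + w) = ω z · ω w and ω (−z) = conj (ω z). Then there exists α : Fin m → ℂ such that for all z : Fin m → ℂ, ω z = Complex.exp ( Σ_{j} ( conj (z j) · α j − z j · conj (α j) ) ). -/

import Mathlib

open intervalIntegral Complex

/-- A continuous homomorphism from `(ℝ,+)` to the unit circle in `ℂ` is `t ↦ exp (i c t)`. -/
lemma one_dim_char (f : ℝ → ℂ) (hcont : Continuous f) (hf0 : f 0 = 1)
    (hmul : ∀ s t : ℝ, f (s + t) = f s * f t) (habs : ∀ t, ‖f t‖ = 1) :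
    ∃ c : ℝ, ∀ t : ℝ, f t = Complex.exp (c * Complex.I * t) := by
  set F : ℝ → ℂ := fun x => ∫ t in (0:ℝ)..x, f t with hFdef
  have hF : ∀ x, HasDerivAt F (f x) x := fun x =>
    integral_hasDerivAt_right (hcont.intervalIntegrable _ _)
      (hcont.stronglyMeasurableAtFilter _ _) hcont.continuousAt
  -- find δ with F δ ≠ 0
  obtain ⟨δ, hδ⟩ : ∃ δ : ℝ, F δ ≠ 0 := by
    by_contra h
    push_neg at h
    have hF0 : HasDerivAt F 0 0 := by
      have : F = fun _ => (0:ℂ) := funext h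
      rw [this]; exact hasDerivAt_const _ _
    have := (hF 0).unique hF0
    rw [hf0] at this
    exact one_ne_zero this
  -- key identity
  have hkey : ∀ s : ℝ, f s = (F (s + δ) - F s) * (F δ)⁻¹ := by
    intro s
    have h1 : F s + (∫ t in s..(s+δ), f t) = F (s + δ) :=
      integral_add_adjacent_intervals (hcont.intervalIntegrable _ _)
        (hcont.intervalIntegrable _ _)
    have h2 : (∫ t in (0:ℝ)..δ, f (s + t)) = ∫ t in s..(s+δ), f t := by
      simpa using integral_comp_add_left f s (a := 0) (b := δ)
    have h3 : (∫ t in (0:ℝ)..δ, f (s + t)) = f s * F δ := by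
      simp_rw [hmul s]
      exact integral_const_mul _ _
    have h4 : f s * F δ = F (s + δ) - F s := by
      rw [← h3, h2]; linear_combination h1
    rw [← h4, mul_assoc, mul_inv_cancel₀ hδ, mul_one]
  set c' : ℂ := (f δ - 1) * (F δ)⁻¹ with hc'
  have hf' : ∀ s : ℝ, HasDerivAt f (c' * f s) s := by
    intro s
    have hd : HasDerivAt (fun s => (F (s + δ) - F s) * (F δ)⁻¹)
        ((f (s + δ) - f s) * (F δ)⁻¹) s := by
      have h1 : HasDerivAt (fun s : ℝ => F (s + δ)) (f (s + δ)) s :=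
        HasDerivAt.comp_add_const _ _ (hF (s + δ))
      exact (h1.sub (hF s)).mul_const _
    have := hd.congr_of_eventuallyEq (Filter.Eventually.of_forall hkey)
    refine this.congr_deriv ?_
    rw [hmul, hc']; ring
  -- solve the ODE
  have hgt : ∀ t : ℝ, f t * Complex.exp (-c' * t) = 1 := by
    have hg : ∀ s : ℝ, HasDerivAt (fun t : ℝ => f t * Complex.exp (-c' * t)) 0 s := by
      intro s
      have he : HasDerivAt (fun t : ℝ => Complex.exp (-c' * t))
          (Complex.exp (-c' * s) * (-c')) s := by
        have h0 : HasDerivAt (fun t : ℝ => -c' * (t:ℂ)) (-c') s := by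
          simpa using (Complex.ofRealCLM.hasDerivAt (x := s)).const_mul (-c')
        simpa using h0.cexp
      have := (hf' s).mul he
      refine this.congr_deriv ?_
      ring
    intro t
    have hconst : ∀ x y : ℝ, (fun t : ℝ => f t * Complex.exp (-c' * t)) x
        = (fun t : ℝ => f t * Complex.exp (-c' * t)) y :=
      is_const_of_deriv_eq_zero (fun x => (hg x).differentiableAt)
        (fun x => (hg x).deriv)
    have := hconst t 0
    simpa [hf0] using this
  have hft : ∀ t : ℝ, f t = Complex.exp (c' * t) := by
    intro t
    have := hgt t
    rw [neg_mul, Complex.exp_neg] at this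
    field_simp at this
    exact this
  -- c' is purely imaginary
  have hre : c'.re = 0 := by
    have h1 := habs 1
    rw [hft 1, Complex.norm_exp] at h1
    simp only [Complex.ofReal_one, mul_one] at h1
    exact Real.exp_eq_exp.mp (by rwa [Real.exp_zero])
  refine ⟨c'.im, fun t => ?_⟩
  rw [hft t]
  congr 1
  apply Complex.ext <;> simp [hre]

/-- A continuous, not identically zero, multiplicative solution of the Cauchy functional
equation on `ℂ^m` satisfying `ω (−z) = conj (ω z)` is the characteristic-function factor of
a multi-mode coherent state: `ω z = exp (Σ_j (conj (z j) · α j − z j · conj (α j)))`. -/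
theorem cauchy_multiplicative_coherent_state (m : ℕ) (ω : (Fin m → ℂ) → ℂ)
    (hcont : Continuous ω) (hne : ∃ z : Fin m → ℂ, ω z ≠ 0)
    (hmul : ∀ z w : Fin m → ℂ, ω (z + w) = ω z * ω w)
    (hconj : ∀ z : Fin m → ℂ, ω (-z) = starRingEnd ℂ (ω z)) :
    ∃ α : Fin m → ℂ, ∀ z : Fin m → ℂ,
      ω z = Complex.exp (∑ j, (starRingEnd ℂ (z j) * α j - z j * starRingEnd ℂ (α j))) := by
  obtain ⟨z₀, hz₀⟩ := hne
  have hω0 : ω 0 = 1 := by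
    have h := hmul z₀ 0
    rw [add_zero] at h
    have h2 : ω z₀ * ω 0 = ω z₀ * 1 := by rw [← h, mul_one]
    exact mul_left_cancel₀ hz₀ h2
  have habs : ∀ z, ‖ω z‖ = 1 := by
    intro z
    have h : ω z * starRingEnd ℂ (ω z) = 1 := by
      rw [← hconj, ← hmul]
      simpa using hω0
    rw [Complex.mul_conj] at h
    have : Complex.normSq (ω z) = 1 := by exact_mod_cast h
    rw [← Complex.sq_norm] at this
    nlinarith [norm_nonneg (ω z)]
  -- single coordinate maps
  have hsingle_cont : ∀ (j : Fin m), Continuous fun c : ℂ => (Pi.single j c : Fin m → ℂ) := by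
    intro j
    have : (fun c : ℂ => (Pi.single j c : Fin m → ℂ))
        = fun c : ℂ => c • (Pi.single j 1 : Fin m → ℂ) := by
      funext c
      rw [← Pi.single_smul, smul_eq_mul, mul_one]
    rw [this]
    exact continuous_id.smul continuous_const
  -- the two real one-parameter subgroups in each coordinate
  have key : ∀ (j : Fin m) (v : ℂ), ∃ c : ℝ, ∀ t : ℝ,
      ω (Pi.single j (t * v)) = Complex.exp (c * Complex.I * t) := by
    intro j v
    apply one_dim_char
    · exact hcont.comp ((hsingle_cont j).comp (continuous_ofReal.mul continuous_const))
    · simpa using hω0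
    · intro s t
      rw [← hmul]
      congr 1
      rw [← Pi.single_add]
      push_cast
      ring_nf
    · intro t; exact habs _
  choose a ha using fun j => key j 1
  choose b hb using fun j => key j Complex.I
  -- decompose ω over coordinates
  have hsum : ∀ (g : Fin m → (Fin m → ℂ)), ω (∑ i, g i) = ∏ i, ω (g i) := by
    intro g
    induction (Finset.univ : Finset (Fin m)) using Finset.induction with
    | empty => simpa using hω0
    | insert _ _ h ih => rw [Finset.sum_insert h, Finset.prod_insert h, hmul, ih]
  refine ⟨fun j => (-(b j : ℂ) + (a j : ℂ) * Complex.I) / 2, fun z => ?_⟩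
  have hdecomp : z = ∑ j, Pi.single j (z j) := by
    rw [Finset.univ_sum_single]
  have hcoord : ∀ j, ω (Pi.single j (z j))
      = Complex.exp ((a j : ℂ) * Complex.I * (z j).re + (b j : ℂ) * Complex.I * (z j).im) := by
    intro j
    have hz : Pi.single j (z j) = (Pi.single j (((z j).re : ℂ) * 1) : Fin m → ℂ)
        + (Pi.single j (((z j).im : ℂ) * Complex.I) : Fin m → ℂ) := by
      rw [← Pi.single_add]
      exact congrArg (Pi.single j) (by rw [mul_one]; exact (Complex.re_add_im (z j)).symm)
    rw [hz, hmul, ha j, hb j, ← Complex.exp_add]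
  calc ω z = ∏ j, ω (Pi.single j (z j)) := by rw [← hsum, ← hdecomp]
    _ = ∏ j, Complex.exp ((a j : ℂ) * Complex.I * (z j).re
          + (b j : ℂ) * Complex.I * (z j).im) := by
        exact Finset.prod_congr rfl fun j _ => hcoord j
    _ = Complex.exp (∑ j, ((a j : ℂ) * Complex.I * (z j).re
          + (b j : ℂ) * Complex.I * (z j).im)) := (Complex.exp_sum _ _).symm
    _ = _ := by
        congr 1
        refine Finset.sum_congr rfl fun j _ => ?_
        have hzj : (z j) = ((z j).re : ℂ) + ((z j).im : ℂ) * Complex.I :=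
          (Complex.re_add_im (z j)).symm
        rw [hzj]
        simp only [map_add, map_mul, map_div₀, map_neg, map_ofNat,
          Complex.conj_ofReal, Complex.conj_I]
        ring_nf
        simp [Complex.I_sq]
        ring
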